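/- Let m > 0 and let K(k) be a positive solution of the backward recurrence K(k) = C_{m,n}(k)^{-1} K(k+1) with K(k) → K(∞) as k → ∞, K^{(1)}(k), K^{(2)}(k) > 0. Then for all k, n: ∑_{i=k+1}^∞ (∏_{j=0}^{i-2} c_{1,n}(j)) K^{(2)}(i−1)/a_{n+1}(i−1) ≤ (1/m) (∏_{j=0}^{k-1} c_{1,n}(j)) K^{(1)}(k), and ∑_{i=k+1}^∞ K^{(1)}(i)/a_n(i) ≤ (1/m) K^{(2)}(k). -/

import Mathlib

open Matrix Filter Finset

/-- The matrix `C_{m,n}(k)` from the quantum solid torus Dirac operator. -/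
noncomputable def Cmat (a c1 c2 : ℕ → ℕ → ℝ) (m : ℤ) (n k : ℕ) :
    Matrix (Fin 2) (Fin 2) ℝ :=
  !![1 / c1 n k, -(m : ℝ) / (a (n + 1) k * c1 n k);
     -(m : ℝ) / (a n (k + 1) * c1 n k),
     c2 n k + (m : ℝ) ^ 2 / (a n (k + 1) * a (n + 1) k * c1 n k)]

theorem stmt_14 (a c1 c2 : ℕ → ℕ → ℝ)
    (ha : ∀ n k, 0 < a n k)
    (hsum : ∀ n, Summable fun k => 1 / a n k)
    (hc1 : ∀ n k, 0 < c1 n k ∧ c1 n k ≤ 1)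
    (hc2 : ∀ n k, 0 < c2 n k ∧ c2 n k ≤ 1)
    (m : ℤ) (hm : 0 < m) (n : ℕ)
    (K : ℕ → Fin 2 → ℝ) (Kinf : Fin 2 → ℝ)
    (hKrec : ∀ k, K k = (Cmat a c1 c2 m n k)⁻¹ *ᵥ K (k + 1))
    (hKlim : Tendsto K atTop (nhds Kinf))
    (hK1 : ∀ k, 0 < K k 0) (hK2 : ∀ k, 0 < K k 1) :
    ∀ k : ℕ,
      Summable (fun l : ℕ =>
        (∏ j ∈ Finset.range (l + k), c1 n j) * K (l + k) 1 / a (n + 1) (l + k)) ∧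
      (∑' l : ℕ,
        (∏ j ∈ Finset.range (l + k), c1 n j) * K (l + k) 1 / a (n + 1) (l + k)) ≤
        (1 / (m : ℝ)) * (∏ j ∈ Finset.range k, c1 n j) * K k 0 ∧
      Summable (fun l : ℕ => K (l + k + 1) 0 / a n (l + k + 1)) ∧
      (∑' l : ℕ, K (l + k + 1) 0 / a n (l + k + 1)) ≤ (1 / (m : ℝ)) * K k 1 := by
  have hm' : (0:ℝ) < (m:ℝ) := by exact_mod_cast hm
  have hmne : (m:ℝ) ≠ 0 := ne_of_gt hm'
  -- C *ᵥ K k = K (k+1)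
  have hC : ∀ k, Cmat a c1 c2 m n k *ᵥ K k = K (k + 1) := by
    intro k
    have hdet : (Cmat a c1 c2 m n k).det = c2 n k / c1 n k := by
      have h1 := (ha n (k+1)).ne'
      have h2 := (ha (n+1) k).ne'
      have h3 := (hc1 n k).1.ne'
      simp [Cmat, Matrix.det_fin_two_of]
      field_simp
      ring
    have hdet' : IsUnit (Cmat a c1 c2 m n k).det := by
      rw [hdet]
      exact (div_pos (hc2 n k).1 (hc1 n k).1).ne'.isUnit
    rw [hKrec k, Matrix.mulVec_mulVec, Matrix.mul_nonsing_inv _ hdet', Matrix.one_mulVec]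
  -- component equations
  have h1 : ∀ k, (m:ℝ) * K k 1 / a (n+1) k = K k 0 - c1 n k * K (k+1) 0 := by
    intro k
    have := congrFun (hC k) 0
    simp [Cmat, Matrix.mulVec, dotProduct, Fin.sum_univ_two] at this
    have ha1 := (ha (n+1) k).ne'
    have hc := (hc1 n k).1.ne'
    field_simp at this ⊢
    refine mul_left_cancel₀ hc ?_
    linear_combination (-c1 n k) * this
  have h2 : ∀ k, (m:ℝ) * K (k+1) 0 / a n (k+1) = c2 n k * K k 1 - K (k+1) 1 := by
    intro k
    have e1 := congrFun (hC k) 1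
    simp [Cmat, Matrix.mulVec, dotProduct, Fin.sum_univ_two] at e1
    have e0 := h1 k
    have ha0 := (ha n (k+1)).ne'
    have ha1 := (ha (n+1) k).ne'
    have hc := (hc1 n k).1.ne'
    field_simp at e1 e0 ⊢
    have hne : a n (k+1) * a (n+1) k * c1 n k ^ 2 ≠ 0 := by
      have := ha n (k+1); have := ha (n+1) k; have := (hc1 n k).1; positivity
    refine mul_left_cancel₀ hne ?_
    linear_combination ((m:ℝ) * a n (k+1) * c1 n k) * e0 - (a n (k+1) * c1 n k) * e1
  intro k
  -- first sum
  set P : ℕ → ℝ := fun l => ∏ j ∈ Finset.range l, c1 n j with hP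
  have hPpos : ∀ l, 0 < P l := fun l => Finset.prod_pos (fun j _ => (hc1 n j).1)
  set f : ℕ → ℝ := fun l => P (l + k) * K (l + k) 1 / a (n + 1) (l + k) with hf
  set g : ℕ → ℝ := fun l => P (l + k) * K (l + k) 0 with hg
  have hfg : ∀ l, f l = (1 / (m:ℝ)) * (g l - g (l + 1)) := by
    intro l
    have e := h1 (l + k)
    have hP1 : P (l + k + 1) = P (l + k) * c1 n (l + k) := Finset.prod_range_succ _ _
    have key : (m:ℝ) * f l = g l - g (l + 1) := by
      simp only [hf, hg, show l + 1 + k = l + k + 1 from by ring, hP1]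
      calc (m:ℝ) * (P (l+k) * K (l+k) 1 / a (n+1) (l+k))
          = P (l+k) * ((m:ℝ) * K (l+k) 1 / a (n+1) (l+k)) := by ring
        _ = P (l+k) * (K (l+k) 0 - c1 n (l+k) * K (l+k+1) 0) := by rw [e]
        _ = P (l+k) * K (l+k) 0 - P (l+k) * c1 n (l+k) * K (l+k+1) 0 := by ring
    rw [← key]
    field_simp
  have hfnonneg : ∀ l, 0 ≤ f l :=
    fun l => le_of_lt (div_pos (mul_pos (hPpos _) (hK2 _)) (ha _ _))
  have hfbound : ∀ N, ∑ l ∈ Finset.range N, f l ≤ (1 / (m:ℝ)) * P k * K k 0 := by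
    intro N
    calc ∑ l ∈ Finset.range N, f l
        = (1 / (m:ℝ)) * (g 0 - g N) := by
          simp only [hfg, ← Finset.mul_sum, Finset.sum_range_sub' g]
      _ ≤ (1 / (m:ℝ)) * g 0 := by
          have h0 : 0 ≤ g N := le_of_lt (mul_pos (hPpos _) (hK1 _))
          have h0' : (0:ℝ) ≤ 1 / (m:ℝ) := by positivity
          nlinarith
      _ = (1 / (m:ℝ)) * P k * K k 0 := by simp [hg, mul_assoc]
  refine ⟨summable_of_sum_range_le hfnonneg hfbound,
    Summable.tsum_le_of_sum_range_le (summable_of_sum_range_le hfnonneg hfbound) hfbound, ?_, ?_⟩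
  all_goals {
    have hfle : ∀ l : ℕ, K (l + k + 1) 0 / a n (l + k + 1)
        ≤ (1 / (m:ℝ)) * (K (l + k) 1 - K (l + k + 1) 1) := by
      intro l
      have e := h2 (l + k)
      have hy := (hK2 (l + k)).le
      have hc2' := (hc2 n (l + k)).2
      have key : (m:ℝ) * (K (l + k + 1) 0 / a n (l + k + 1))
          ≤ K (l + k) 1 - K (l + k + 1) 1 := by
        rw [mul_div_assoc'] at *
        nlinarith
      calc K (l + k + 1) 0 / a n (l + k + 1)
          = (1 / (m:ℝ)) * ((m:ℝ) * (K (l + k + 1) 0 / a n (l + k + 1))) := by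
            field_simp
        _ ≤ (1 / (m:ℝ)) * (K (l + k) 1 - K (l + k + 1) 1) := by
            have h0' : (0:ℝ) ≤ 1 / (m:ℝ) := by positivity
            exact mul_le_mul_of_nonneg_left key h0'
    have hnn : ∀ l : ℕ, 0 ≤ K (l + k + 1) 0 / a n (l + k + 1) :=
      fun l => le_of_lt (div_pos (hK1 _) (ha _ _))
    have hbd : ∀ N, ∑ l ∈ Finset.range N, K (l + k + 1) 0 / a n (l + k + 1)
        ≤ (1 / (m:ℝ)) * K k 1 := by
      intro N
      calc ∑ l ∈ Finset.range N, K (l + k + 1) 0 / a n (l + k + 1)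
          ≤ ∑ l ∈ Finset.range N, (1 / (m:ℝ)) * (K (l + k) 1 - K (l + k + 1) 1) := by
            exact Finset.sum_le_sum (fun l _ => hfle l)
        _ = (1 / (m:ℝ)) * (K (0 + k) 1 - K (N + k) 1) := by
            rw [← Finset.mul_sum]
            congr 1
            have := Finset.sum_range_sub' (fun l => K (l + k) 1) N
            simpa [show ∀ l : ℕ, l + 1 + k = l + k + 1 from fun l => by ring] using this
        _ ≤ (1 / (m:ℝ)) * K k 1 := by
            have h0 : 0 < K (N + k) 1 := hK2 _
            have h0' : (0:ℝ) ≤ 1 / (m:ℝ) := by positivity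
            have : K (0 + k) 1 = K k 1 := by norm_num
            nlinarith
    first
      | exact summable_of_sum_range_le hnn hbd
      | exact Summable.tsum_le_of_sum_range_le (summable_of_sum_range_le hnn hbd) hbd
  }
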